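/- For a weighted 4-cycle on vertices v₁v₂v₃v₄ with edge weights w(v₁v₂)=w(v₂v₃)=w(v₃v₄)=1 and w(v₄v₁)=1/t with t > 0, the weighted vertex spanning-tree polynomial equals (1/t)(t·x₂x₃ + x₁x₂ + x₃x₄ + x₁x₄), and this polynomial is real stable if and only if t = 1. -/

import Mathlib

def RealStable {σ : Type*} (P : MvPolynomial σ ℝ) : Prop :=
  ∀ z : σ → ℂ, (∀ i, 0 < (z i).im) → MvPolynomial.aeval z P ≠ 0

open scoped Classical in
/-- The weighted vertex spanning-tree polynomial
`P_{G,w} = Σ_{T spanning tree of G} (Π_{e∈T} w(e)) · Π_v x_v^{deg_T(v)−1}`. -/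
noncomputable def treePoly {V : Type*} [Fintype V] [DecidableEq V]
    (G : SimpleGraph V) (w : Sym2 V → ℝ) : MvPolynomial V ℝ :=
  ∑ T ∈ Finset.univ.filter (fun T : SimpleGraph V => T ≤ G ∧ T.IsTree),
    MvPolynomial.C (∏ e ∈ T.edgeFinset, w e) *
      ∏ v, MvPolynomial.X v ^ (T.degree v - 1)

open SimpleGraph Finset

instance stmt6.instFrom (V : Type*) [DecidableEq V] (s : Set (Sym2 V)) [DecidablePred (· ∈ s)] :
    DecidableRel (fromEdgeSet s).Adj := fun a b =>
  decidable_of_iff (s(a,b) ∈ s ∧ a ≠ b) (fromEdgeSet_adj s).symm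

instance stmt6.instSingle (V : Type*) [DecidableEq V] (e : Sym2 V) :
    DecidablePred (· ∈ ({e} : Set (Sym2 V))) := fun x =>
  decidable_of_iff (x = e) (by simp)

instance stmt6.instCoe (V : Type*) [DecidableEq V] (F : Finset (Sym2 V)) :
    DecidablePred (· ∈ (↑F : Set (Sym2 V))) := fun x =>
  decidable_of_iff (x ∈ F) (Finset.mem_coe).symm

namespace stmt6

def S : Finset (Sym2 (Fin 4)) := {s(0,1), s(1,2), s(2,3), s(3,0)}
def F0 : Finset (Sym2 (Fin 4)) := {s(1,2), s(2,3), s(3,0)}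
def F1 : Finset (Sym2 (Fin 4)) := {s(0,1), s(2,3), s(3,0)}
def F2 : Finset (Sym2 (Fin 4)) := {s(0,1), s(1,2), s(3,0)}
def F3 : Finset (Sym2 (Fin 4)) := {s(0,1), s(1,2), s(2,3)}

def T0 : SimpleGraph (Fin 4) := fromEdgeSet ↑F0
def T1 : SimpleGraph (Fin 4) := fromEdgeSet ↑F1
def T2 : SimpleGraph (Fin 4) := fromEdgeSet ↑F2
def T3 : SimpleGraph (Fin 4) := fromEdgeSet ↑F3

def Gr : SimpleGraph (Fin 4) := fromEdgeSet {s(0, 1), s(1, 2), s(2, 3), s(3, 0)}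

instance : DecidablePred (· ∈ ({s(0, 1), s(1, 2), s(2, 3), s(3, 0)} : Set (Sym2 (Fin 4)))) :=
  fun e => decidable_of_iff (e = s(0,1) ∨ e = s(1,2) ∨ e = s(2,3) ∨ e = s(3,0)) (by simp)

lemma powS : S.powersetCard 3 = {F0, F1, F2, F3} := by decide

instance : DecidableRel T0.Adj :=
  inferInstanceAs (DecidableRel (fromEdgeSet (↑F0 : Set (Sym2 (Fin 4)))).Adj)
instance : DecidableRel T1.Adj :=
  inferInstanceAs (DecidableRel (fromEdgeSet (↑F1 : Set (Sym2 (Fin 4)))).Adj)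
instance : DecidableRel T2.Adj :=
  inferInstanceAs (DecidableRel (fromEdgeSet (↑F2 : Set (Sym2 (Fin 4)))).Adj)
instance : DecidableRel T3.Adj :=
  inferInstanceAs (DecidableRel (fromEdgeSet (↑F3 : Set (Sym2 (Fin 4)))).Adj)

lemma tree0 : T0.IsTree := ⟨by rw [connected_iff]; exact ⟨by decide, ⟨0⟩⟩,
  by rw [isAcyclic_iff_forall_adj_isBridge]
     intro v w h
     rw [isBridge_iff]
     exact (by revert h; revert v w; decide)⟩
lemma tree1 : T1.IsTree := ⟨by rw [connected_iff]; exact ⟨by decide, ⟨0⟩⟩,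
  by rw [isAcyclic_iff_forall_adj_isBridge]
     intro v w h
     rw [isBridge_iff]
     exact (by revert h; revert v w; decide)⟩
lemma tree2 : T2.IsTree := ⟨by rw [connected_iff]; exact ⟨by decide, ⟨0⟩⟩,
  by rw [isAcyclic_iff_forall_adj_isBridge]
     intro v w h
     rw [isBridge_iff]
     exact (by revert h; revert v w; decide)⟩
lemma tree3 : T3.IsTree := ⟨by rw [connected_iff]; exact ⟨by decide, ⟨0⟩⟩,
  by rw [isAcyclic_iff_forall_adj_isBridge]
     intro v w h
     rw [isBridge_iff]
     exact (by revert h; revert v w; decide)⟩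

lemma le0 : T0 ≤ Gr := by
  apply fromEdgeSet_mono
  intro x hx
  simp only [Finset.mem_coe, F0, Finset.mem_insert, Finset.mem_singleton] at hx
  simp only [Set.mem_insert_iff, Set.mem_singleton_iff]
  tauto

lemma eS0 : T0.edgeSet = ↑F0 := by
  rw [T0, edgeSet_fromEdgeSet]
  ext e
  simp only [Set.mem_diff, Set.mem_setOf_eq, Finset.mem_coe]
  constructor
  · exact fun h => h.1
  · intro h
    refine ⟨h, ?_⟩
    revert h
    simp only [F0, Finset.mem_insert, Finset.mem_singleton]
    rintro (rfl|rfl|rfl) <;> decide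

lemma le1 : T1 ≤ Gr := by
  apply fromEdgeSet_mono
  intro x hx
  simp only [Finset.mem_coe, F1, Finset.mem_insert, Finset.mem_singleton] at hx
  simp only [Set.mem_insert_iff, Set.mem_singleton_iff]
  tauto

lemma eS1 : T1.edgeSet = ↑F1 := by
  rw [T1, edgeSet_fromEdgeSet]
  ext e
  simp only [Set.mem_diff, Set.mem_setOf_eq, Finset.mem_coe]
  constructor
  · exact fun h => h.1
  · intro h
    refine ⟨h, ?_⟩
    revert h
    simp only [F1, Finset.mem_insert, Finset.mem_singleton]
    rintro (rfl|rfl|rfl) <;> decide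

lemma le2 : T2 ≤ Gr := by
  apply fromEdgeSet_mono
  intro x hx
  simp only [Finset.mem_coe, F2, Finset.mem_insert, Finset.mem_singleton] at hx
  simp only [Set.mem_insert_iff, Set.mem_singleton_iff]
  tauto

lemma eS2 : T2.edgeSet = ↑F2 := by
  rw [T2, edgeSet_fromEdgeSet]
  ext e
  simp only [Set.mem_diff, Set.mem_setOf_eq, Finset.mem_coe]
  constructor
  · exact fun h => h.1
  · intro h
    refine ⟨h, ?_⟩
    revert h
    simp only [F2, Finset.mem_insert, Finset.mem_singleton]
    rintro (rfl|rfl|rfl) <;> decide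

lemma le3 : T3 ≤ Gr := by
  apply fromEdgeSet_mono
  intro x hx
  simp only [Finset.mem_coe, F3, Finset.mem_insert, Finset.mem_singleton] at hx
  simp only [Set.mem_insert_iff, Set.mem_singleton_iff]
  tauto

lemma eS3 : T3.edgeSet = ↑F3 := by
  rw [T3, edgeSet_fromEdgeSet]
  ext e
  simp only [Set.mem_diff, Set.mem_setOf_eq, Finset.mem_coe]
  constructor
  · exact fun h => h.1
  · intro h
    refine ⟨h, ?_⟩
    revert h
    simp only [F3, Finset.mem_insert, Finset.mem_singleton]
    rintro (rfl|rfl|rfl) <;> decide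

lemma Tne : T0 ≠ T1 ∧ T0 ≠ T2 ∧ T0 ≠ T3 ∧ T1 ≠ T2 ∧ T1 ≠ T3 ∧ T2 ≠ T3 := by
  refine ⟨?_, ?_, ?_, ?_, ?_, ?_⟩ <;>
  · intro h
    have := congrArg SimpleGraph.edgeSet h
    simp only [eS0, eS1, eS2, eS3] at this
    exact absurd (Finset.coe_injective this) (by decide)

lemma efc (G : SimpleGraph (Fin 4)) [DecidableRel G.Adj] (inst : Fintype G.edgeSet) :
    @SimpleGraph.edgeFinset _ G inst = G.edgeFinset := by
  rw [Subsingleton.elim inst G.fintypeEdgeSet]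

lemma degc (G : SimpleGraph (Fin 4)) [DecidableRel G.Adj] (v : Fin 4)
    (inst : Fintype (G.neighborSet v)) :
    @SimpleGraph.degree _ G v inst = G.degree v := by
  rw [Subsingleton.elim inst (G.neighborSetFintype v)]

open scoped Classical in
lemma filt : (Finset.univ.filter (fun T : SimpleGraph (Fin 4) => T ≤ Gr ∧ T.IsTree))
    = {T0, T1, T2, T3} := by
  ext T
  simp only [Finset.mem_filter, Finset.mem_univ, true_and, Finset.mem_insert,
    Finset.mem_singleton]
  constructor
  · rintro ⟨hle, hT⟩
    have hsub : T.edgeFinset ⊆ S := by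
      intro e he
      rw [SimpleGraph.mem_edgeFinset] at he
      have h2 : e ∈ Gr.edgeSet := SimpleGraph.edgeSet_mono hle he
      rw [Gr, edgeSet_fromEdgeSet] at h2
      rcases h2 with ⟨h3, -⟩
      simp only [Set.mem_insert_iff, Set.mem_singleton_iff] at h3
      simp only [S, Finset.mem_insert, Finset.mem_singleton]
      tauto
    have hcard : T.edgeFinset.card = 3 := by
      have := hT.card_edgeFinset
      simp only [Fintype.card_fin] at this
      omega
    have hmem : T.edgeFinset ∈ S.powersetCard 3 :=
      Finset.mem_powersetCard.mpr ⟨hsub, hcard⟩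
    rw [powS] at hmem
    have hTeq : T = fromEdgeSet ↑T.edgeFinset := by
      rw [coe_edgeFinset, fromEdgeSet_edgeSet]
    simp only [Finset.mem_insert, Finset.mem_singleton] at hmem
    rcases hmem with h | h | h | h
    · exact Or.inl (by rw [hTeq, h]; rfl)
    · exact Or.inr (Or.inl (by rw [hTeq, h]; rfl))
    · exact Or.inr (Or.inr (Or.inl (by rw [hTeq, h]; rfl)))
    · exact Or.inr (Or.inr (Or.inr (by rw [hTeq, h]; rfl)))
  · rintro (rfl | rfl | rfl | rfl)
    exacts [⟨le0, tree0⟩, ⟨le1, tree1⟩, ⟨le2, tree2⟩, ⟨le3, tree3⟩]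

lemma ef0 (inst : Fintype T0.edgeSet) : @SimpleGraph.edgeFinset _ T0 inst = F0 := by
  rw [Subsingleton.elim inst T0.fintypeEdgeSet]; decide

lemma hd0 (v : Fin 4) (inst : Fintype (T0.neighborSet v)) :
    @SimpleGraph.degree _ T0 v inst = ![1, 1, 2, 2] v := by
  rw [Subsingleton.elim inst (T0.neighborSetFintype v)]
  exact (by decide : ∀ u, T0.degree u = _ ) v

lemma ef1 (inst : Fintype T1.edgeSet) : @SimpleGraph.edgeFinset _ T1 inst = F1 := by
  rw [Subsingleton.elim inst T1.fintypeEdgeSet]; decide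

lemma hd1 (v : Fin 4) (inst : Fintype (T1.neighborSet v)) :
    @SimpleGraph.degree _ T1 v inst = ![2, 1, 1, 2] v := by
  rw [Subsingleton.elim inst (T1.neighborSetFintype v)]
  exact (by decide : ∀ u, T1.degree u = _ ) v

lemma ef2 (inst : Fintype T2.edgeSet) : @SimpleGraph.edgeFinset _ T2 inst = F2 := by
  rw [Subsingleton.elim inst T2.fintypeEdgeSet]; decide

lemma hd2 (v : Fin 4) (inst : Fintype (T2.neighborSet v)) :
    @SimpleGraph.degree _ T2 v inst = ![2, 2, 1, 1] v := by
  rw [Subsingleton.elim inst (T2.neighborSetFintype v)]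
  exact (by decide : ∀ u, T2.degree u = _ ) v

lemma ef3 (inst : Fintype T3.edgeSet) : @SimpleGraph.edgeFinset _ T3 inst = F3 := by
  rw [Subsingleton.elim inst T3.fintypeEdgeSet]; decide

lemma hd3 (v : Fin 4) (inst : Fintype (T3.neighborSet v)) :
    @SimpleGraph.degree _ T3 v inst = ![1, 2, 2, 1] v := by
  rw [Subsingleton.elim inst (T3.neighborSetFintype v)]
  exact (by decide : ∀ u, T3.degree u = _ ) v


open MvPolynomial in
open scoped Classical in
lemma treePoly_eq (t : ℝ) (ht : 0 < t) :
    treePoly Gr (fun e => if e = s(3, 0) then 1 / t else 1) =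
      C (1 / t) * (C t * X 1 * X 2 + X 0 * X 1 + X 2 * X 3 + X 0 * X 3) := by
  rw [treePoly, filt]
  rw [Finset.sum_insert (by simp [Tne.1, Tne.2.1, Tne.2.2.1]),
      Finset.sum_insert (by simp [Tne.2.2.2.1, Tne.2.2.2.2.1]),
      Finset.sum_insert (by simp [Tne.2.2.2.2.2]), Finset.sum_singleton]
  simp only [ef0, ef1, ef2, ef3, hd0, hd1, hd2, hd3]
  rw [Fin.prod_univ_four, Fin.prod_univ_four, Fin.prod_univ_four, Fin.prod_univ_four]
  simp only [Matrix.cons_val_zero, Matrix.cons_val_one, Matrix.head_cons,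
    Matrix.cons_val_two, Matrix.tail_cons, Matrix.cons_val_three]
  norm_num
  rw [if_pos (by decide : s(3,0) ∈ F0), if_pos (by decide : s(3,0) ∈ F1),
      if_pos (by decide : s(3,0) ∈ F2), if_neg (by decide : s(3,0) ∉ F3)]
  have hct : (C t : MvPolynomial (Fin 4) ℝ) * C t⁻¹ = 1 := by
    rw [← C_mul, mul_inv_cancel₀ ht.ne', C_1]
  simp only [map_one, one_mul]
  linear_combination (-(X 1 * X 2) : MvPolynomial (Fin 4) ℝ) * hct

open MvPolynomial Complex in
lemma stable_iff (t : ℝ) (ht : 0 < t) :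
    RealStable ((C (1 / t) : MvPolynomial (Fin 4) ℝ) *
      (C t * X 1 * X 2 + X 0 * X 1 + X 2 * X 3 + X 0 * X 3)) ↔ t = 1 := by
  constructor
  · intro hst
    by_contra hne
    have hA : (1 + (1 + (t : ℂ)) * Complex.I) ≠ 0 := by
      intro h
      have h2 := congrArg Complex.im h
      simp at h2
      linarith
    set u : ℂ := -((1 + 2 * Complex.I) / (1 + (1 + (t : ℂ)) * Complex.I)) with hu
    have hq : u.im ≠ 0 := by
      have him : u.im = (t - 1) / Complex.normSq (1 + (1 + (t : ℂ)) * Complex.I) := by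
        rw [hu]
        simp [Complex.div_im]
        ring
      rw [him]
      exact div_ne_zero (sub_ne_zero.mpr hne) (Complex.normSq_pos.mpr hA).ne'
    set c : ℂ := (((1 - u.re) / u.im : ℝ) : ℂ) + Complex.I with hc
    have hcim : c.im = 1 := by simp [hc]
    have hcre : c.re = (1 - u.re) / u.im := by simp [hc]
    set z : Fin 4 → ℂ := ![1 + Complex.I, u * c, Complex.I, c] with hz
    have hzim : ∀ i, 0 < (z i).im := by
      intro i
      fin_cases i
      · simp [hz]
      · show 0 < (u * c).im
        rw [Complex.mul_im, hcim, hcre, mul_one, mul_div_cancel₀ _ hq]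
        norm_num
      · simp [hz]
      · show 0 < c.im
        rw [hcim]; norm_num
    apply hst z hzim
    have huA : u * (1 + (1 + (t : ℂ)) * Complex.I) + (1 + 2 * Complex.I) = 0 := by
      rw [hu, neg_mul, div_mul_cancel₀ _ hA]
      ring
    have hz0 : z 0 = 1 + Complex.I := rfl
    have hz1 : z 1 = u * c := rfl
    have hz2 : z 2 = Complex.I := rfl
    have hz3 : z 3 = c := rfl
    simp only [map_mul, map_add, aeval_C, aeval_X, hz0, hz1, hz2, hz3,
      Complex.coe_algebraMap, Complex.ofReal_div, Complex.ofReal_one]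
    linear_combination ((1 / (t : ℂ)) * c) * huA
  · rintro rfl
    intro z hz
    simp only [map_mul, map_add, aeval_C, aeval_X, Complex.coe_algebraMap]
    norm_num
    intro h
    have hfac : (z 0 + z 2) * (z 1 + z 3) = 0 := by linear_combination h
    rcases mul_eq_zero.mp hfac with h1 | h1
    · have h2 := congrArg Complex.im h1
      simp [Complex.add_im] at h2
      linarith [hz 0, hz 2]
    · have h2 := congrArg Complex.im h1
      simp [Complex.add_im] at h2
      linarith [hz 1, hz 3]

end stmt6

open MvPolynomial in
/-- For the weighted 4-cycle `v₁v₂v₃v₄` (vertices `0,1,2,3`) with edge weights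
`w(v₁v₂)=w(v₂v₃)=w(v₃v₄)=1` and `w(v₄v₁)=1/t`, `t > 0`, the weighted vertex
spanning-tree polynomial equals `(1/t)(t·x₂x₃ + x₁x₂ + x₃x₄ + x₁x₄)`, and
it is real stable if and only if `t = 1`. -/
theorem stmt_6 (t : ℝ) (ht : 0 < t) :
    let G : SimpleGraph (Fin 4) :=
      SimpleGraph.fromEdgeSet {s(0, 1), s(1, 2), s(2, 3), s(3, 0)}
    let w : Sym2 (Fin 4) → ℝ := fun e => if e = s(3, 0) then 1 / t else 1
    treePoly G w =
        C (1 / t) * (C t * X 1 * X 2 + X 0 * X 1 + X 2 * X 3 + X 0 * X 3) ∧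
      (RealStable (treePoly G w) ↔ t = 1) := by
  intro G w
  constructor
  · exact stmt6.treePoly_eq t ht
  · rw [show treePoly G w = _ from stmt6.treePoly_eq t ht]
    exact stmt6.stable_iff t ht
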